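/- Let 0 < p ≤ n+1, 0 < q < ∞, and c, v > 0. Consider the sequence indexed by pairs (k, i) with k > N an integer and 1 ≤ i ≤ ⌈c·2^{k(n+1)}⌉, whose value at (k,i) is 2^{−k} v. Then this sequence does not belong to ℓ^{p,q}; i.e., its Lorentz quasi-norm is infinite. -/

import Mathlib

open ENNReal MeasureTheory Set


lemma lint_inv_top {ε : ℝ} (hε : 0 < ε) :
    ∫⁻ l in Set.Ioo (0:ℝ) ε, ENNReal.ofReal l⁻¹ = ⊤ := by
  by_contra h
  have hm : AEStronglyMeasurable (fun l : ℝ => l⁻¹) (volume.restrict (Set.Ioo 0 ε)) :=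
    (measurable_inv).aestronglyMeasurable
  have hpos : 0 ≤ᵐ[volume.restrict (Set.Ioo 0 ε)] (fun l : ℝ => l⁻¹) := by
    filter_upwards [ae_restrict_mem measurableSet_Ioo] with x hx
    exact le_of_lt (inv_pos.mpr hx.1)
  have hint : Integrable (fun l : ℝ => l⁻¹) (volume.restrict (Set.Ioo 0 ε)) :=
    (lintegral_ofReal_ne_top_iff_integrable hm hpos).mp h
  have hint2 : IntegrableOn (fun l : ℝ => l ^ (-1 : ℝ)) (Set.Ioo 0 ε) := by
    apply IntegrableOn.congr_fun hint ?_ measurableSet_Ioo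
    intro x hx
    simp [Real.rpow_neg_one]
  rw [intervalIntegral.integrableOn_Ioo_rpow_iff hε] at hint2
  linarith

set_option maxHeartbeats 1000000 in
/-- STATEMENT 10: for `0 < p ≤ n+1`, `0 < q < ∞` and `c, v > 0`, the sequence indexed by pairs
`(k, i)` with `k > N` and `1 ≤ i ≤ ⌈c 2^{k(n+1)}⌉`, taking the value `2^{-k} v` at `(k,i)`,
does not lie in `ℓ^{p,q}`: its Lorentz quasi-norm integral diverges. -/theorem stmt10 (n : ℕ) (p q c v : ℝ) (hp0 : 0 < p) (hp : p ≤ (n : ℝ) + 1) (hq : 0 < q)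
    (hc : 0 < c) (hv : 0 < v) (N : ℤ) :
    ∫⁻ l in Set.Ioi (0 : ℝ),
        (ENNReal.ofReal (l ^ p) *
            (Set.ncard {x : ℤ × ℕ | N < x.1 ∧ 1 ≤ x.2 ∧
                (x.2 : ℤ) ≤ ⌈c * (2 : ℝ) ^ (x.1 * ((n : ℤ) + 1))⌉ ∧
                l < (2 : ℝ) ^ (-x.1) * v} : ℝ≥0∞)) ^ (q / p) /
          ENNReal.ofReal l = ⊤ := by
  set A : ℝ := c * (v/4) ^ (n+1) with hA_def
  have hA : 0 < A := mul_pos hc (pow_pos (by linarith) _)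
  set B : ℝ := A ^ (q/p) with hB_def
  have hB : 0 < B := Real.rpow_pos_of_pos hA _
  set ε : ℝ := min 1 (v * (2:ℝ) ^ (-(N+2) : ℤ)) with hε_def
  have hε : 0 < ε := lt_min one_pos (mul_pos hv (zpow_pos (by norm_num) _))
  -- pointwise bound
  have key : ∀ l ∈ Set.Ioo (0:ℝ) ε,
      ENNReal.ofReal (B * l⁻¹) ≤
        (ENNReal.ofReal (l ^ p) *
            (Set.ncard {x : ℤ × ℕ | N < x.1 ∧ 1 ≤ x.2 ∧
                (x.2 : ℤ) ≤ ⌈c * (2 : ℝ) ^ (x.1 * ((n : ℤ) + 1))⌉ ∧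
                l < (2 : ℝ) ^ (-x.1) * v} : ℝ≥0∞)) ^ (q / p) /
          ENNReal.ofReal l := by
    intro l hl
    obtain ⟨hl0, hlε⟩ := hl
    have hl1 : l ≤ 1 := le_of_lt (lt_of_lt_of_le hlε (min_le_left _ _))
    have hlv : l < v * (2:ℝ) ^ (-(N+2) : ℤ) := lt_of_lt_of_le hlε (min_le_right _ _)
    have hvl : (0:ℝ) < v / l := div_pos hv hl0
    set K : ℤ := Int.log 2 (v/l) with hK_def
    set k : ℤ := K - 1 with hk_def
    -- N + 2 ≤ K
    have hNK : N + 2 ≤ K := by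
      rw [hK_def, ← Int.zpow_le_iff_le_log one_lt_two hvl]
      have h2pos : (0:ℝ) < (2:ℝ) ^ (N+2 : ℤ) := zpow_pos (by norm_num) _
      rw [le_div_iff₀ hl0]
      have : l * (2:ℝ) ^ (N+2 : ℤ) < v := by
        have := mul_lt_mul_of_pos_right hlv h2pos
        rwa [mul_assoc, ← zpow_add₀ (by norm_num : (2:ℝ) ≠ 0), neg_add_cancel, zpow_zero,
          mul_one] at this
      push_cast
      linarith [this]
    have hkN : N < k := by omega
    -- l < 2^(-k) * v
    have h2K : (2:ℝ) ^ K * l ≤ v := by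
      have := Int.zpow_log_le_self (R := ℝ) one_lt_two hvl
      rw [← hK_def] at this
      have := (le_div_iff₀ hl0).mp (by push_cast at this ⊢; linarith)
      linarith
    have hlk : l < (2:ℝ) ^ (-k) * v := by
      calc l < 2 * l := by linarith
        _ = (2:ℝ) ^ (-k) * ((2:ℝ) ^ K * l) := by
            rw [← mul_assoc, ← zpow_add₀ (by norm_num : (2:ℝ) ≠ 0),
              show -k + K = 1 by omega, zpow_one]
        _ ≤ (2:ℝ) ^ (-k) * v :=
            mul_le_mul_of_nonneg_left h2K (zpow_nonneg (by norm_num) _)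
    -- v/(4l) ≤ 2^k
    have hk2 : v / (4*l) ≤ (2:ℝ) ^ k := by
      have h3 : v / l < (2:ℝ) ^ (K+1) := by
        have := Int.lt_zpow_succ_log_self (R := ℝ) one_lt_two (v/l)
        rw [← hK_def] at this
        push_cast at this
        exact this
      have h4 : (2:ℝ) ^ (K+1) = (2:ℝ) ^ k * 4 := by
        rw [show K + 1 = k + 2 by omega, zpow_add₀ (by norm_num : (2:ℝ) ≠ 0)]
        norm_num
      rw [div_le_iff₀ (by linarith : (0:ℝ) < 4*l)]
      have h5 : v < (2:ℝ) ^ k * 4 * l := by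
        have := (div_lt_iff₀ hl0).mp h3
        rw [h4] at this
        linarith
      linarith
    have h2kpos : (0:ℝ) < (2:ℝ) ^ k := zpow_pos (by norm_num) _
    -- the count lower bound
    set S : Set (ℤ × ℕ) := {x : ℤ × ℕ | N < x.1 ∧ 1 ≤ x.2 ∧
        (x.2 : ℤ) ≤ ⌈c * (2 : ℝ) ^ (x.1 * ((n : ℤ) + 1))⌉ ∧
        l < (2 : ℝ) ^ (-x.1) * v} with hS_def
    have hceil : (0:ℤ) < ⌈c * (2:ℝ) ^ (k * ((n:ℤ)+1))⌉ :=
      Int.ceil_pos.mpr (mul_pos hc (zpow_pos (by norm_num) _))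
    set m : ℕ := (⌈c * (2:ℝ) ^ (k * ((n:ℤ)+1))⌉).toNat with hm_def
    have hmZ : (m : ℤ) = ⌈c * (2:ℝ) ^ (k * ((n:ℤ)+1))⌉ := Int.toNat_of_nonneg hceil.le
    have hm_real : c * (2:ℝ) ^ (k * ((n:ℤ)+1)) ≤ (m:ℝ) := by
      have h1 := Int.le_ceil (c * (2:ℝ) ^ (k * ((n:ℤ)+1)))
      have h2 : ((m:ℤ) : ℝ) = ((⌈c * (2:ℝ) ^ (k * ((n:ℤ)+1))⌉ : ℤ) : ℝ) := by rw [hmZ]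
      push_cast at h2
      linarith
    -- S is finite
    set M : ℕ := (⌈c * (2:ℝ) ^ (K * ((n:ℤ)+1))⌉).toNat with hM_def
    have hfin : S.Finite := by
      apply Set.Finite.subset ((Set.finite_Icc (N+1) K).prod (Set.finite_Icc 1 M))
      rintro ⟨a, i⟩ ⟨haN, hi1, hic, hal⟩
      dsimp only at haN hi1 hic hal
      have haK : a ≤ K := by
        rw [hK_def, ← Int.zpow_le_iff_le_log one_lt_two hvl]
        have h2a : (0:ℝ) < (2:ℝ) ^ a := zpow_pos (by norm_num) _
        rw [le_div_iff₀ hl0]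
        have h6 : (2:ℝ) ^ a * l < v := by
          have h7 := mul_lt_mul_of_pos_left hal h2a
          rwa [← mul_assoc, ← zpow_add₀ (by norm_num : (2:ℝ) ≠ 0), add_neg_cancel, zpow_zero,
            one_mul] at h7
        push_cast
        linarith [h6]
      have hiM : i ≤ M := by
        have hmono : (2:ℝ) ^ (a * ((n:ℤ)+1)) ≤ (2:ℝ) ^ (K * ((n:ℤ)+1)) := by
          apply zpow_le_zpow_right₀ (by norm_num : (1:ℝ) ≤ 2)
          have : (0:ℤ) ≤ (n:ℤ) + 1 := by positivity
          exact mul_le_mul_of_nonneg_right haK this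
        have hcc : ⌈c * (2:ℝ) ^ (a * ((n:ℤ)+1))⌉ ≤ ⌈c * (2:ℝ) ^ (K * ((n:ℤ)+1))⌉ :=
          Int.ceil_le_ceil (by nlinarith)
        have hMZ : ((M:ℤ)) = ⌈c * (2:ℝ) ^ (K * ((n:ℤ)+1))⌉ := by
          rw [hM_def]
          refine Int.toNat_of_nonneg ?_
          exact le_trans hceil.le (by
            calc ⌈c * (2:ℝ) ^ (k * ((n:ℤ)+1))⌉ ≤ ⌈c * (2:ℝ) ^ (K * ((n:ℤ)+1))⌉ := by
                  apply Int.ceil_le_ceil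
                  have hmono2 : (2:ℝ) ^ (k * ((n:ℤ)+1)) ≤ (2:ℝ) ^ (K * ((n:ℤ)+1)) := by
                    apply zpow_le_zpow_right₀ (by norm_num : (1:ℝ) ≤ 2)
                    have hkK : k ≤ K := by omega
                    have : (0:ℤ) ≤ (n:ℤ) + 1 := by positivity
                    exact mul_le_mul_of_nonneg_right hkK this
                  nlinarith)
        have : (i : ℤ) ≤ (M : ℤ) := by rw [hMZ]; exact le_trans hic hcc
        exact_mod_cast this
      exact ⟨⟨by omega, haK⟩, ⟨hi1, hiM⟩⟩
    have hsubT : (fun i : ℕ => ((k : ℤ), i)) '' Set.Icc 1 m ⊆ S := by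
      rintro x ⟨i', ⟨hi1, him⟩, rfl⟩
      refine ⟨hkN, hi1, ?_, hlk⟩
      dsimp only
      rw [← hmZ]
      exact_mod_cast him
    have hcount : m ≤ S.ncard := by
      have hinj : Function.Injective (fun i : ℕ => ((k : ℤ), i)) := by
        intro a b h
        injection h with h1 h2
      have h1 : ((fun i : ℕ => ((k : ℤ), i)) '' Set.Icc 1 m).ncard = m := by
        rw [Set.ncard_image_of_injective _ hinj, ← Finset.coe_Icc, Set.ncard_coe_finset,
          Nat.card_Icc]
        omega
      rw [← h1]
      exact Set.ncard_le_ncard hsubT hfin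
    -- the real-number estimate : A ≤ l^p * m
    have hq4 : v / (4*l) * l = v/4 := by field_simp
    have hl_one : 1 ≤ l ^ (p - ((n:ℝ)+1)) :=
      Real.one_le_rpow_of_pos_of_le_one_of_nonpos hl0 hl1 (by linarith)
    have hsplit : l ^ p = l ^ (p - ((n:ℝ)+1)) * l ^ (n+1 : ℕ) := by
      rw [← Real.rpow_natCast l (n+1), ← Real.rpow_add hl0]
      push_cast
      ring_nf
    have hpowk : (v/(4*l)) ^ (n+1) ≤ (2:ℝ) ^ (k * ((n:ℤ)+1)) := by
      have : (2:ℝ) ^ (k * ((n:ℤ)+1)) = ((2:ℝ) ^ k) ^ (n+1 : ℕ) := by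
        rw [zpow_mul]
        norm_cast
      rw [this]
      exact pow_le_pow_left₀ (le_of_lt (div_pos hv (by linarith))) hk2 _
    have e1 : A * l ^ (p - ((n:ℝ)+1)) = c * (v/(4*l)) ^ (n+1) * l ^ p := by
      have hv4 : (v/4 : ℝ) ^ (n+1) = (v/(4*l)) ^ (n+1) * l ^ (n+1 : ℕ) := by
        rw [← mul_pow, hq4]
      rw [hA_def, hv4, hsplit]
      ring
    have hAlm : A ≤ l ^ p * (m:ℝ) := by
      have hlp : (0:ℝ) < l ^ p := Real.rpow_pos_of_pos hl0 _
      have e2 : c * (v/(4*l)) ^ (n+1) * l ^ p ≤ (m:ℝ) * l ^ p := by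
        have : c * (v/(4*l)) ^ (n+1) ≤ (m:ℝ) := by nlinarith
        nlinarith
      calc A ≤ A * l ^ (p - ((n:ℝ)+1)) := le_mul_of_one_le_right hA.le hl_one
        _ = c * (v/(4*l)) ^ (n+1) * l ^ p := e1
        _ ≤ (m:ℝ) * l ^ p := e2
        _ = l ^ p * (m:ℝ) := by ring
    -- now in ENNReal
    have hle1 : ENNReal.ofReal A ≤ ENNReal.ofReal (l ^ p) * (S.ncard : ℝ≥0∞) := by
      calc ENNReal.ofReal A ≤ ENNReal.ofReal (l ^ p * (m:ℝ)) := ENNReal.ofReal_le_ofReal hAlm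
        _ = ENNReal.ofReal (l ^ p) * (m : ℝ≥0∞) := by
            rw [ENNReal.ofReal_mul (Real.rpow_nonneg hl0.le _), ENNReal.ofReal_natCast]
        _ ≤ ENNReal.ofReal (l ^ p) * (S.ncard : ℝ≥0∞) :=
            mul_le_mul_right (by exact_mod_cast hcount) _
    have hBeq : ENNReal.ofReal (B * l⁻¹) = ENNReal.ofReal B / ENNReal.ofReal l := by
      rw [ENNReal.ofReal_mul hB.le, ENNReal.ofReal_inv_of_pos hl0, div_eq_mul_inv]
    rw [hBeq]
    apply ENNReal.div_le_div_right
    have : ENNReal.ofReal B = (ENNReal.ofReal A) ^ (q/p) := by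
      rw [hB_def, ← ENNReal.ofReal_rpow_of_pos hA]
    rw [this]
    exact ENNReal.rpow_le_rpow hle1 (div_nonneg hq.le hp0.le)
  -- put it together
  rw [← top_le_iff]
  have h1 : ∫⁻ l in Set.Ioo (0:ℝ) ε, ENNReal.ofReal (B * l⁻¹) = ⊤ := by
    have heq : ∀ l : ℝ, ENNReal.ofReal (B * l⁻¹)
        = ENNReal.ofReal B * ENNReal.ofReal l⁻¹ := fun l => ENNReal.ofReal_mul hB.le
    simp_rw [heq]
    rw [lintegral_const_mul _ measurable_inv.ennreal_ofReal,
      lint_inv_top hε, ENNReal.mul_top]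
    simp only [ne_eq, ENNReal.ofReal_eq_zero, not_le]
    exact hB
  calc (⊤ : ℝ≥0∞) = ∫⁻ l in Set.Ioo (0:ℝ) ε, ENNReal.ofReal (B * l⁻¹) := h1.symm
    _ ≤ ∫⁻ l in Set.Ioo (0:ℝ) ε,
        (ENNReal.ofReal (l ^ p) *
            (Set.ncard {x : ℤ × ℕ | N < x.1 ∧ 1 ≤ x.2 ∧
                (x.2 : ℤ) ≤ ⌈c * (2 : ℝ) ^ (x.1 * ((n : ℤ) + 1))⌉ ∧
                l < (2 : ℝ) ^ (-x.1) * v} : ℝ≥0∞)) ^ (q / p) /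
          ENNReal.ofReal l := setLIntegral_mono' measurableSet_Ioo key
    _ ≤ _ := lintegral_mono_set Set.Ioo_subset_Ioi_self
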